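/- Let Z be a finite-dimensional real vector space and let A : [0,r] → B_sym(Z,ℝ) be a C¹ map into the space of symmetric bilinear forms on Z. Let N = Ker(A(0)) = {v ∈ Z : A(0)(v,w) = 0 for all w ∈ Z} and let Ã denote the restriction of the derivative A'(0) to N × N. If Ã is nondegenerate on N, then there exists δ > 0 such that for all t ∈ (0,δ]: A(t) is nondegenerate, n₊(A(t)) = n₊(A(0)) + n₊(Ã), and n₋(A(t)) = n₋(A(0)) + n₋(Ã). -/

import Mathlib

open Set

/-- The positive type number `n₊` of a bilinear form `B`, restricted to a subspace `W`:
supremum of the dimensions of the subspaces of `W` on which `B` is positive definite. -/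
noncomputable def nPos {Z : Type*} [NormedAddCommGroup Z] [NormedSpace ℝ Z]
    (B : Z →L[ℝ] Z →L[ℝ] ℝ) (W : Submodule ℝ Z) : ℕ :=
  sSup {d : ℕ | ∃ W' : Submodule ℝ Z, W' ≤ W ∧ Module.finrank ℝ ↥W' = d ∧
    ∀ x ∈ W', x ≠ 0 → 0 < B x x}

/-- The negative type number `n₋` of a bilinear form `B`, restricted to a subspace `W`. -/
noncomputable def nNeg {Z : Type*} [NormedAddCommGroup Z] [NormedSpace ℝ Z]
    (B : Z →L[ℝ] Z →L[ℝ] ℝ) (W : Submodule ℝ Z) : ℕ :=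
  sSup {d : ℕ | ∃ W' : Submodule ℝ Z, W' ≤ W ∧ Module.finrank ℝ ↥W' = d ∧
    ∀ x ∈ W', x ≠ 0 → B x x < 0}

/-- The kernel of a bilinear form `B`. -/
def kerForm {Z : Type*} [NormedAddCommGroup Z] [NormedSpace ℝ Z]
    (B : Z →L[ℝ] Z →L[ℝ] ℝ) : Submodule ℝ Z where
  carrier := {x | ∀ y, B x y = 0}
  add_mem' := by
    intro x y hx hy z
    simp [map_add, hx z, hy z]
  zero_mem' := by
    intro z
    simp
  smul_mem' := by
    intro c x hx z
    simp [map_smul, hx z]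

section AuxA
variable {Z : Type*} [NormedAddCommGroup Z] [NormedSpace ℝ Z] [FiniteDimensional ℝ Z]

lemma nPos_eq_of {B : Z →L[ℝ] Z →L[ℝ] ℝ} {W : Submodule ℝ Z} {m : ℕ}
    (hmem : ∃ W' : Submodule ℝ Z, W' ≤ W ∧ Module.finrank ℝ ↥W' = m ∧
      ∀ x ∈ W', x ≠ 0 → 0 < B x x)
    (hub : ∀ d : ℕ, (∃ W' : Submodule ℝ Z, W' ≤ W ∧ Module.finrank ℝ ↥W' = d ∧
      ∀ x ∈ W', x ≠ 0 → 0 < B x x) → d ≤ m) :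
    nPos B W = m :=
  IsGreatest.csSup_eq ⟨hmem, fun _ hd => hub _ hd⟩

lemma nNeg_eq_of {B : Z →L[ℝ] Z →L[ℝ] ℝ} {W : Submodule ℝ Z} {m : ℕ}
    (hmem : ∃ W' : Submodule ℝ Z, W' ≤ W ∧ Module.finrank ℝ ↥W' = m ∧
      ∀ x ∈ W', x ≠ 0 → B x x < 0)
    (hub : ∀ d : ℕ, (∃ W' : Submodule ℝ Z, W' ≤ W ∧ Module.finrank ℝ ↥W' = d ∧
      ∀ x ∈ W', x ≠ 0 → B x x < 0) → d ≤ m) :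
    nNeg B W = m :=
  IsGreatest.csSup_eq ⟨hmem, fun _ hd => hub _ hd⟩

lemma inf_eq_bot_of {W₁ W₂ : Submodule ℝ Z}
    (h : ∀ x : Z, x ∈ W₁ → x ∈ W₂ → x ≠ 0 → False) : W₁ ⊓ W₂ = ⊥ := by
  rw [Submodule.eq_bot_iff]
  rintro x ⟨hx1, hx2⟩
  by_contra hx0
  exact h x hx1 hx2 hx0

lemma finrank_add_le_of_inf_bot (W₁ W₂ : Submodule ℝ Z) (W : Submodule ℝ Z)
    (h1 : W₁ ≤ W) (h2 : W₂ ≤ W) (h : W₁ ⊓ W₂ = ⊥) :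
    Module.finrank ℝ W₁ + Module.finrank ℝ W₂ ≤ Module.finrank ℝ W := by
  have e := Submodule.finrank_sup_add_finrank_inf_eq W₁ W₂
  rw [h] at e
  simp only [finrank_bot, add_zero] at e
  rw [← e]
  exact Submodule.finrank_mono (sup_le h1 h2)

lemma finrank_sup_of_inf_bot (W₁ W₂ : Submodule ℝ Z) (h : W₁ ⊓ W₂ = ⊥) :
    Module.finrank ℝ ↥(W₁ ⊔ W₂) = Module.finrank ℝ W₁ + Module.finrank ℝ W₂ := by
  have e := Submodule.finrank_sup_add_finrank_inf_eq W₁ W₂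
  rw [h] at e
  simpa using e

end AuxA

section AuxB
variable {Z : Type*} [NormedAddCommGroup Z] [NormedSpace ℝ Z] [FiniteDimensional ℝ Z]

lemma exists_diag (B : Z →L[ℝ] Z →L[ℝ] ℝ) (W : Submodule ℝ Z)
    (hsymm : ∀ x y : Z, B x y = B y x) :
    ∃ P Q R : Submodule ℝ Z, P ≤ W ∧ Q ≤ W ∧ R ≤ W ∧
      (∀ x ∈ P, x ≠ 0 → 0 < B x x) ∧
      (∀ x ∈ Q, x ≠ 0 → B x x < 0) ∧
      Module.finrank ℝ P = nPos B W ∧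
      Module.finrank ℝ Q = nNeg B W ∧
      nPos B W + nNeg B W + Module.finrank ℝ R = Module.finrank ℝ ↥W ∧
      (∀ x ∈ R, ∀ y ∈ W, B x y = 0) ∧
      (∀ x ∈ W, (∀ y ∈ W, B x y = 0) → x ∈ R) := by
  classical
  set F : LinearMap.BilinForm ℝ ↥W := LinearMap.mk₂ ℝ (fun x y : ↥W => B x y)
    (by intro m₁ m₂ n; push_cast; simp)
    (by intro c m n; push_cast; simp)
    (by intro m n₁ n₂; push_cast; simp)
    (by intro c m n; push_cast; simp) with hF
  have hFsymm : LinearMap.IsSymm F := by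
    rw [LinearMap.isSymm_def]
    intro x y
    simp only [hF, LinearMap.mk₂_apply, RingHom.id_apply]
    exact hsymm _ _
  obtain ⟨w, hw⟩ := LinearMap.BilinForm.exists_orthogonal_basis hFsymm
  set u : Fin (Module.finrank ℝ ↥W) → Z := fun i => (w i : Z) with hu
  have hu_li : LinearIndependent ℝ u := w.linearIndependent.map' W.subtype W.ker_subtype
  set d : Fin (Module.finrank ℝ ↥W) → ℝ := fun i => B (u i) (u i) with hd
  have horth : ∀ i j, i ≠ j → B (u i) (u j) = 0 := by
    intro i j hij
    exact LinearMap.isOrthoᵢ_def.1 hw i j hij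
  -- expansion of elements of W in the basis
  have hx_eq : ∀ x : ↥W, (x : Z) = ∑ i, (w.repr x) i • u i := by
    intro x
    conv_lhs => rw [← w.sum_repr x]
    push_cast
    rfl
  have expand : ∀ (y : Z) (x : ↥W), B y x = ∑ i, (w.repr x) i * B y (u i) := by
    intro y x
    conv_lhs => rw [hx_eq x]
    rw [map_sum]
    simp [smul_eq_mul]
  have key2 : ∀ (x : ↥W) j, B (x : Z) (u j) = (w.repr x) j * d j := by
    intro x j
    rw [hsymm _ (u j), expand (u j) x,
      Finset.sum_eq_single j
        (fun i _ hij => by rw [hsymm (u j) (u i), horth i j hij, mul_zero])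
        (fun h => absurd (Finset.mem_univ j) h)]
  have key1 : ∀ x : ↥W, B (x : Z) (x : Z) = ∑ i, (w.repr x i)^2 * d i := by
    intro x
    rw [expand (x : Z) x]
    refine Finset.sum_congr rfl fun i _ => ?_
    rw [key2 x i]
    ring
  -- spans
  have hsp_le : ∀ s : Finset (Fin (Module.finrank ℝ ↥W)), Submodule.span ℝ (u '' ↑s) ≤ W := by
    intro s
    rw [Submodule.span_le]
    rintro _ ⟨i, _, rfl⟩
    exact (w i).2
  have hsp_mem : ∀ (s : Finset (Fin (Module.finrank ℝ ↥W))) (x : ↥W),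
      (x : Z) ∈ Submodule.span ℝ (u '' ↑s) ↔ ∀ i ∉ s, w.repr x i = 0 := by
    intro s x
    have himg : u '' ↑s = W.subtype '' (⇑w '' ↑s) := by
      rw [← Set.image_comp]; rfl
    rw [himg, ← Submodule.map_span]
    constructor
    · rintro hmem
      obtain ⟨y, hy, hyx⟩ := Submodule.mem_map.1 hmem
      have hyx' : y = x := Subtype.ext hyx
      subst hyx'
      have hsub := (Module.Basis.mem_span_image w).1 hy
      intro i hi
      by_contra h0
      exact hi (hsub (Finsupp.mem_support_iff.2 h0))
    · intro h
      refine Submodule.mem_map.2 ⟨x, ?_, rfl⟩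
      refine (Module.Basis.mem_span_image w).2 ?_
      intro i hi
      by_contra his
      exact Finsupp.mem_support_iff.1 hi (h i his)
  have hsp_rank : ∀ s : Finset (Fin (Module.finrank ℝ ↥W)),
      Module.finrank ℝ ↥(Submodule.span ℝ (u '' ↑s)) = s.card := by
    intro s
    have h1 : LinearIndependent ℝ (fun x : (↑s : Set (Fin (Module.finrank ℝ ↥W))) => u x) :=
      hu_li.comp Subtype.val Subtype.val_injective
    rw [Set.image_eq_range, finrank_span_eq_card h1]
    simp
  -- quadratic values on spans
  have hBxx : ∀ (s : Finset (Fin (Module.finrank ℝ ↥W))) (x : Z), x ∈ Submodule.span ℝ (u '' ↑s) →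
      ∃ c : Fin (Module.finrank ℝ ↥W) → ℝ, B x x = ∑ i ∈ s, (c i)^2 * d i ∧ (x ≠ 0 → ∃ j ∈ s, c j ≠ 0) := by
    intro s x hx
    have hxW : x ∈ W := hsp_le s hx
    refine ⟨fun i => w.repr ⟨x, hxW⟩ i, ?_, ?_⟩
    · have hk : B x x = ∑ i, (w.repr (⟨x, hxW⟩ : ↥W) i)^2 * d i := key1 ⟨x, hxW⟩
      rw [hk]
      exact (Finset.sum_subset (Finset.subset_univ s) (fun i _ his => by
        rw [(hsp_mem s ⟨x, hxW⟩).1 hx i his]; ring)).symm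
    · intro hx0
      by_contra hall
      push_neg at hall
      have hrepr0 : w.repr ⟨x, hxW⟩ = 0 := by
        ext i
        by_cases his : i ∈ s
        · exact hall i his
        · exact (hsp_mem s ⟨x, hxW⟩).1 hx i his
      have : (⟨x, hxW⟩ : ↥W) = 0 := by
        simpa using (LinearEquiv.map_eq_zero_iff w.repr).1 hrepr0
      exact hx0 (by simpa using congrArg Subtype.val this)
  -- index sets
  set spos := Finset.univ.filter (fun i => 0 < d i) with hspos
  set sneg := Finset.univ.filter (fun i => d i < 0) with hsneg
  set szero := Finset.univ.filter (fun i => d i = 0) with hszero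
  have hmem_spos : ∀ i, i ∈ spos ↔ 0 < d i := by intro i; simp [hspos]
  have hmem_sneg : ∀ i, i ∈ sneg ↔ d i < 0 := by intro i; simp [hsneg]
  have hmem_szero : ∀ i, i ∈ szero ↔ d i = 0 := by intro i; simp [hszero]
  have hdisj1 : Disjoint spos sneg := by
    rw [Finset.disjoint_left]
    intro i hi hj
    rw [hmem_spos] at hi; rw [hmem_sneg] at hj; linarith
  have hdisj2 : Disjoint (spos ∪ sneg) szero := by
    rw [Finset.disjoint_left]
    intro i hi hj
    rw [hmem_szero] at hj
    rcases Finset.mem_union.1 hi with h | h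
    · rw [hmem_spos] at h; linarith
    · rw [hmem_sneg] at h; linarith
  have hdisj3 : Disjoint sneg szero := by
    rw [Finset.disjoint_left]
    intro i hi hj
    rw [hmem_sneg] at hi; rw [hmem_szero] at hj; linarith
  have huniv : spos ∪ sneg ∪ szero = Finset.univ := by
    ext i
    simp only [Finset.mem_union, hmem_spos, hmem_sneg, hmem_szero, Finset.mem_univ, iff_true]
    rcases lt_trichotomy (d i) 0 with h | h | h
    · exact Or.inl (Or.inr h)
    · exact Or.inr h
    · exact Or.inl (Or.inl h)
  have hcard : spos.card + sneg.card + szero.card = Module.finrank ℝ ↥W := by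
    rw [← Finset.card_union_of_disjoint hdisj1, ← Finset.card_union_of_disjoint hdisj2, huniv,
      Finset.card_univ, Fintype.card_fin]
  -- definiteness on the spans
  have hposdef : ∀ x ∈ Submodule.span ℝ (u '' ↑spos), x ≠ 0 → 0 < B x x := by
    intro x hx hx0
    obtain ⟨c, hc, hex⟩ := hBxx _ x hx
    obtain ⟨j, hjs, hj0⟩ := hex hx0
    rw [hc]
    refine Finset.sum_pos' (fun i hi => ?_) ⟨j, hjs, ?_⟩
    · have : 0 < d i := (hmem_spos i).1 hi
      exact mul_nonneg (sq_nonneg _) this.le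
    · have h1 : 0 < d j := (hmem_spos j).1 hjs
      have h2 : 0 < (c j)^2 := lt_of_le_of_ne (sq_nonneg _) (Ne.symm (pow_ne_zero 2 hj0))
      exact mul_pos h2 h1
  have hnegdef : ∀ x ∈ Submodule.span ℝ (u '' ↑sneg), x ≠ 0 → B x x < 0 := by
    intro x hx hx0
    obtain ⟨c, hc, hex⟩ := hBxx _ x hx
    obtain ⟨j, hjs, hj0⟩ := hex hx0
    have h1 : 0 < ∑ i ∈ sneg, (c i)^2 * (-d i) := by
      refine Finset.sum_pos' (fun i hi => ?_) ⟨j, hjs, ?_⟩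
      · have : d i < 0 := (hmem_sneg i).1 hi
        exact mul_nonneg (sq_nonneg _) (by linarith)
      · have hd1 : d j < 0 := (hmem_sneg j).1 hjs
        have h2 : 0 < (c j)^2 := lt_of_le_of_ne (sq_nonneg _) (Ne.symm (pow_ne_zero 2 hj0))
        exact mul_pos h2 (by linarith)
    have h2 : ∑ i ∈ sneg, (c i)^2 * (-d i) = -∑ i ∈ sneg, (c i)^2 * d i := by
      rw [← Finset.sum_neg_distrib]
      exact Finset.sum_congr rfl (fun i _ => by ring)
    rw [hc]; rw [h2] at h1; linarith
  have hnonpos : ∀ x ∈ Submodule.span ℝ (u '' ↑(sneg ∪ szero)), B x x ≤ 0 := by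
    intro x hx
    obtain ⟨c, hc, -⟩ := hBxx _ x hx
    rw [hc]
    refine Finset.sum_nonpos (fun i hi => ?_)
    rcases Finset.mem_union.1 hi with h | h
    · have : d i < 0 := (hmem_sneg i).1 h
      exact mul_nonpos_of_nonneg_of_nonpos (sq_nonneg _) this.le
    · have : d i = 0 := (hmem_szero i).1 h
      rw [this, mul_zero]
  have hnonneg : ∀ x ∈ Submodule.span ℝ (u '' ↑(spos ∪ szero)), 0 ≤ B x x := by
    intro x hx
    obtain ⟨c, hc, -⟩ := hBxx _ x hx
    rw [hc]
    refine Finset.sum_nonneg (fun i hi => ?_)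
    rcases Finset.mem_union.1 hi with h | h
    · have : 0 < d i := (hmem_spos i).1 h
      exact mul_nonneg (sq_nonneg _) this.le
    · have : d i = 0 := (hmem_szero i).1 h
      rw [this, mul_zero]
  -- kernel facts
  have hker1 : ∀ i ∈ szero, ∀ y ∈ W, B (u i) y = 0 := by
    intro i hi y hy
    have hdi : d i = 0 := (hmem_szero i).1 hi
    have h2 := key2 ⟨y, hy⟩ i
    rw [hsymm (u i) y]
    calc B y (u i) = (w.repr ⟨y, hy⟩) i * d i := h2
    _ = 0 := by rw [hdi, mul_zero]
  have hkerspan : ∀ x ∈ Submodule.span ℝ (u '' ↑szero), ∀ y ∈ W, B x y = 0 := by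
    intro x hx y hy
    induction hx using Submodule.span_induction with
    | mem z hz =>
      obtain ⟨i, hi, rfl⟩ := hz
      exact hker1 i (by simpa using hi) y hy
    | zero => simp
    | add a b ha hb iha ihb => simp [iha, ihb]
    | smul c a ha iha => simp [iha]
  have hkerconv : ∀ x ∈ W, (∀ y ∈ W, B x y = 0) → x ∈ Submodule.span ℝ (u '' ↑szero) := by
    intro x hxW hker
    refine (hsp_mem szero ⟨x, hxW⟩).2 (fun i hi => ?_)
    have hdi : ¬ d i = 0 := fun h => hi ((hmem_szero i).2 h)
    have h4 : (w.repr ⟨x, hxW⟩) i * d i = 0 := by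
      rw [← key2 ⟨x, hxW⟩ i]
      exact hker (u i) (w i).2
    rcases mul_eq_zero.1 h4 with h | h
    · exact h
    · exact absurd h hdi
  -- values of nPos and nNeg
  have hnPos : nPos B W = spos.card := by
    apply nPos_eq_of
    · exact ⟨_, hsp_le spos, hsp_rank spos, hposdef⟩
    · rintro dd ⟨W', hW'W, hW'rank, hW'pos⟩
      have hinf : W' ⊓ Submodule.span ℝ (u '' ↑(sneg ∪ szero)) = ⊥ :=
        inf_eq_bot_of (fun x h1 h2 h0 =>
          absurd (hW'pos x h1 h0) (not_lt.2 (hnonpos x h2)))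
      have hle := finrank_add_le_of_inf_bot _ _ W hW'W (hsp_le _) hinf
      rw [hW'rank, hsp_rank] at hle
      have hc2 : (sneg ∪ szero).card = sneg.card + szero.card :=
        Finset.card_union_of_disjoint hdisj3
      omega
  have hdisj4 : Disjoint spos szero := by
    rw [Finset.disjoint_left]
    intro i hi hj
    rw [hmem_spos] at hi; rw [hmem_szero] at hj; linarith
  have hnNeg : nNeg B W = sneg.card := by
    apply nNeg_eq_of
    · exact ⟨_, hsp_le sneg, hsp_rank sneg, hnegdef⟩
    · rintro dd ⟨W', hW'W, hW'rank, hW'neg⟩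
      have hinf : W' ⊓ Submodule.span ℝ (u '' ↑(spos ∪ szero)) = ⊥ :=
        inf_eq_bot_of (fun x h1 h2 h0 =>
          absurd (hW'neg x h1 h0) (not_lt.2 (hnonneg x h2)))
      have hle := finrank_add_le_of_inf_bot _ _ W hW'W (hsp_le _) hinf
      rw [hW'rank, hsp_rank] at hle
      have hc2 : (spos ∪ szero).card = spos.card + szero.card :=
        Finset.card_union_of_disjoint hdisj4
      omega
  exact ⟨_, _, _, hsp_le spos, hsp_le sneg, hsp_le szero, hposdef, hnegdef,
    by rw [hsp_rank, hnPos], by rw [hsp_rank, hnNeg],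
    by rw [hsp_rank, hnPos, hnNeg]; omega, hkerspan, hkerconv⟩

end AuxB

section AuxC
variable {Z : Type*} [NormedAddCommGroup Z] [NormedSpace ℝ Z] [FiniteDimensional ℝ Z]

lemma pert {r : ℝ} (hr : 0 < r) (A : ℝ → Z →L[ℝ] Z →L[ℝ] ℝ)
    (hA : ContDiffOn ℝ 1 A (Icc 0 r)) (V : Submodule ℝ Z)
    (h0 : ∀ x ∈ V, 0 ≤ A 0 x x)
    (h1 : ∀ x ∈ V, x ≠ 0 → A 0 x x = 0 → 0 < derivWithin A (Icc 0 r) 0 x x) :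
    ∃ δ : ℝ, 0 < δ ∧ δ ≤ r ∧ ∀ t ∈ Ioc (0:ℝ) δ, ∀ x ∈ V, x ≠ 0 → 0 < A t x x := by
  by_contra hcon
  push_neg at hcon
  set D := derivWithin A (Icc 0 r) 0 with hD
  have hseq : ∀ k : ℕ, ∃ t, t ∈ Ioc (0:ℝ) (min r (1/(k+1))) ∧
      ∃ x, x ∈ V ∧ x ≠ 0 ∧ A t x x ≤ 0 := by
    intro k
    have hpos : 0 < min r (1/(k+1:ℝ)) := lt_min hr (by positivity)
    obtain ⟨t, ht, x, hxV, hx0, hxle⟩ := hcon (min r (1/(k+1))) hpos (min_le_left _ _)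
    exact ⟨t, ht, x, hxV, hx0, hxle⟩
  choose t ht x hxV hx0 hxle using hseq
  have htpos : ∀ k, 0 < t k := fun k => (ht k).1
  have htmem : ∀ k, t k ∈ Icc 0 r := fun k =>
    ⟨(htpos k).le, le_trans (ht k).2 (min_le_left _ _)⟩
  set y : ℕ → Z := fun k => ‖x k‖⁻¹ • x k with hy
  have hyV : ∀ k, y k ∈ V := fun k => V.smul_mem _ (hxV k)
  have hynorm : ∀ k, ‖y k‖ = 1 := by
    intro k
    rw [hy]
    simp only [norm_smul, norm_inv, norm_norm]
    exact inv_mul_cancel₀ (norm_ne_zero_iff.2 (hx0 k))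
  have hyA : ∀ k, A (t k) (y k) (y k) ≤ 0 := by
    intro k
    have heq : A (t k) (y k) (y k) = (‖x k‖⁻¹)^2 * A (t k) (x k) (x k) := by
      simp only [hy, map_smul, ContinuousLinearMap.smul_apply, smul_eq_mul]
      ring
    rw [heq]
    exact mul_nonpos_of_nonneg_of_nonpos (by positivity) (hxle k)
  have hyA0 : ∀ k, 0 ≤ A 0 (y k) (y k) := fun k => h0 _ (hyV k)
  have hSeq : {z : Z | z ∈ V ∧ ‖z‖ = 1} = (V : Set Z) ∩ Metric.sphere 0 1 := by
    ext z
    simp [Set.mem_inter_iff, mem_sphere_zero_iff_norm]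
  have hS : IsCompact {z : Z | z ∈ V ∧ ‖z‖ = 1} := by
    rw [hSeq]
    exact (isCompact_sphere (0:Z) 1).of_isClosed_subset
      ((Submodule.closed_of_finiteDimensional V).inter Metric.isClosed_sphere)
      Set.inter_subset_right
  obtain ⟨z, hzS, φ, hφmono, hφlim⟩ := hS.tendsto_subseq (fun k => ⟨hyV k, hynorm k⟩)
  have htlim : Filter.Tendsto (fun k => t (φ k)) Filter.atTop (nhds 0) := by
    refine squeeze_zero (fun k => (htpos _).le) (fun k => ?_)
      tendsto_one_div_add_atTop_nhds_zero_nat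
    refine le_trans (le_trans (ht (φ k)).2 (min_le_right _ _)) ?_
    apply one_div_le_one_div_of_le (by positivity)
    have hk : (k : ℝ) ≤ (φ k : ℝ) := by exact_mod_cast hφmono.le_apply
    linarith
  have h0mem : (0:ℝ) ∈ Icc 0 r := ⟨le_refl 0, hr.le⟩
  have hdiff :=
    ((hA.differentiableOn one_ne_zero) 0 h0mem).hasDerivWithinAt
  have hlo : (fun s => A s - A 0 - (s - 0) • D) =o[nhdsWithin 0 (Icc 0 r)] fun s => s - 0 :=
    hasDerivWithinAt_iff_isLittleO.1 hdiff
  have htlim' : Filter.Tendsto (fun k => t (φ k)) Filter.atTop (nhdsWithin 0 (Icc 0 r)) := by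
    rw [tendsto_nhdsWithin_iff]
    exact ⟨htlim, Filter.Eventually.of_forall (fun k => htmem _)⟩
  have hcomp : (fun k => A (t (φ k)) - A 0 - (t (φ k) - 0) • D) =o[Filter.atTop]
      fun k => t (φ k) - 0 := hlo.comp_tendsto htlim'
  set ε : ℕ → ℝ := fun k => ‖A (t (φ k)) - A 0 - (t (φ k)) • D‖ / t (φ k) with hε
  have hεlim : Filter.Tendsto ε Filter.atTop (nhds 0) := by
    have h1' := Asymptotics.IsLittleO.norm_left (E' := Z →L[ℝ] Z →L[ℝ] ℝ) hcomp
    have h2 := h1'.tendsto_div_nhds_zero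
    refine h2.congr (fun k => ?_)
    simp only [sub_zero, hε]
  have hbound : ∀ k, |A (t (φ k)) (y (φ k)) (y (φ k)) - A 0 (y (φ k)) (y (φ k))
      - t (φ k) * D (y (φ k)) (y (φ k))| ≤ ε k * t (φ k) := by
    intro k
    have h3 : A (t (φ k)) (y (φ k)) (y (φ k)) - A 0 (y (φ k)) (y (φ k))
        - t (φ k) * D (y (φ k)) (y (φ k))
        = (A (t (φ k)) - A 0 - (t (φ k)) • D) (y (φ k)) (y (φ k)) := by
      simp only [ContinuousLinearMap.sub_apply, ContinuousLinearMap.smul_apply, smul_eq_mul]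
    have h5 : ε k * t (φ k) = ‖A (t (φ k)) - A 0 - (t (φ k)) • D‖ :=
      div_mul_cancel₀ _ (ne_of_gt (htpos (φ k)))
    rw [h3, h5, ← Real.norm_eq_abs]
    calc ‖(A (t (φ k)) - A 0 - (t (φ k)) • D) (y (φ k)) (y (φ k))‖
        ≤ ‖A (t (φ k)) - A 0 - (t (φ k)) • D‖ * ‖y (φ k)‖ * ‖y (φ k)‖ :=
          ContinuousLinearMap.le_opNorm₂ _ _ _
      _ = ‖A (t (φ k)) - A 0 - (t (φ k)) • D‖ := by rw [hynorm]; ring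
  have hDnorm : ∀ k, |D (y (φ k)) (y (φ k))| ≤ ‖D‖ := by
    intro k
    rw [← Real.norm_eq_abs]
    calc ‖D (y (φ k)) (y (φ k))‖ ≤ ‖D‖ * ‖y (φ k)‖ * ‖y (φ k)‖ :=
        ContinuousLinearMap.le_opNorm₂ _ _ _
      _ = ‖D‖ := by rw [hynorm]; ring
  have hDle : ∀ k, D (y (φ k)) (y (φ k)) ≤ ε k := by
    intro k
    have hb := (abs_le.1 (hbound k)).1
    have hAt := hyA (φ k)
    have hA0 := hyA0 (φ k)
    have h6 : t (φ k) * D (y (φ k)) (y (φ k)) ≤ t (φ k) * ε k := by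
      have hcm : ε k * t (φ k) = t (φ k) * ε k := mul_comm _ _
      linarith
    exact (mul_le_mul_iff_right₀ (htpos (φ k))).1 h6
  have hA0le : ∀ k, A 0 (y (φ k)) (y (φ k)) ≤ t (φ k) * (‖D‖ + ε k) := by
    intro k
    have hb := (abs_le.1 (hbound k)).1
    have hAt := hyA (φ k)
    have hDb := abs_le.1 (hDnorm k)
    have hm : t (φ k) * -‖D‖ ≤ t (φ k) * D (y (φ k)) (y (φ k)) :=
      mul_le_mul_of_nonneg_left hDb.1 (htpos (φ k)).le
    have hcm : ε k * t (φ k) = t (φ k) * ε k := mul_comm _ _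
    have hexp : t (φ k) * (‖D‖ + ε k) = t (φ k) * ‖D‖ + t (φ k) * ε k := by ring
    have hneg : t (φ k) * -‖D‖ = -(t (φ k) * ‖D‖) := by ring
    linarith
  have hzV : z ∈ V := hzS.1
  have hz0 : z ≠ 0 := by
    intro h
    have := hzS.2
    rw [h, norm_zero] at this
    norm_num at this
  have hcA0 : Continuous fun v : Z => A 0 v v := (A 0).continuous.clm_apply continuous_id
  have hcD : Continuous fun v : Z => D v v := D.continuous.clm_apply continuous_id
  have hcont0 : Filter.Tendsto (fun k => A 0 (y (φ k)) (y (φ k))) Filter.atTop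
      (nhds (A 0 z z)) := (hcA0.tendsto z).comp hφlim
  have hcontD : Filter.Tendsto (fun k => D (y (φ k)) (y (φ k))) Filter.atTop
      (nhds (D z z)) := (hcD.tendsto z).comp hφlim
  have hrhs : Filter.Tendsto (fun k => t (φ k) * (‖D‖ + ε k)) Filter.atTop (nhds 0) := by
    have := htlim.mul (Filter.Tendsto.add tendsto_const_nhds hεlim :
      Filter.Tendsto (fun k => ‖D‖ + ε k) Filter.atTop (nhds (‖D‖ + 0)))
    simpa using this
  have hA0z_le : A 0 z z ≤ 0 := le_of_tendsto_of_tendsto' hcont0 hrhs hA0le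
  have hA0z : A 0 z z = 0 := le_antisymm hA0z_le (h0 z hzV)
  have hDz_le : D z z ≤ 0 := le_of_tendsto_of_tendsto' hcontD hεlim hDle
  exact absurd (h1 z hzV hz0 hA0z) (not_lt.2 hDz_le)

end AuxC

lemma mem_kerForm {Z : Type*} [NormedAddCommGroup Z] [NormedSpace ℝ Z]
    {B : Z →L[ℝ] Z →L[ℝ] ℝ} {x : Z} : x ∈ kerForm B ↔ ∀ y, B x y = 0 := Iff.rfl


set_option maxHeartbeats 1000000 in
/-- If `A : [0,r] → B_sym(Z,ℝ)` is `C¹` and the restriction `Ã` of `A'(0)` to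
`N = Ker(A(0))` is nondegenerate, then for small `t > 0` the form `A(t)` is nondegenerate
and `n₊(A(t)) = n₊(A(0)) + n₊(Ã)`, `n₋(A(t)) = n₋(A(0)) + n₋(Ã)`. -/
theorem type_numbers_perturbation
    {Z : Type*} [NormedAddCommGroup Z] [NormedSpace ℝ Z] [FiniteDimensional ℝ Z]
    {r : ℝ} (hr : 0 < r)
    (A : ℝ → Z →L[ℝ] Z →L[ℝ] ℝ)
    (hA : ContDiffOn ℝ 1 A (Icc 0 r))
    (hAsymm : ∀ t ∈ Icc 0 r, ∀ x y : Z, A t x y = A t y x)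
    (hnd : ∀ x ∈ kerForm (A 0),
      (∀ y ∈ kerForm (A 0), derivWithin A (Icc 0 r) 0 x y = 0) → x = 0) :
    ∃ δ > 0, δ ≤ r ∧ ∀ t ∈ Ioc (0:ℝ) δ,
      (∀ x : Z, (∀ y : Z, A t x y = 0) → x = 0) ∧
      nPos (A t) ⊤ = nPos (A 0) ⊤ + nPos (derivWithin A (Icc 0 r) 0) (kerForm (A 0)) ∧
      nNeg (A t) ⊤ = nNeg (A 0) ⊤ + nNeg (derivWithin A (Icc 0 r) 0) (kerForm (A 0)) := by
  classical
  set D := derivWithin A (Icc 0 r) 0 with hD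
  set N := kerForm (A 0) with hN
  have h0mem : (0:ℝ) ∈ Icc 0 r := ⟨le_refl 0, hr.le⟩
  have hA0symm : ∀ x y : Z, A 0 x y = A 0 y x := hAsymm 0 h0mem
  have hdiff :=
    ((hA.differentiableOn one_ne_zero) 0 h0mem).hasDerivWithinAt
  -- symmetry of the derivative
  have hDsymm : ∀ x y : Z, D x y = D y x := by
    intro x y
    set φ : (Z →L[ℝ] Z →L[ℝ] ℝ) →L[ℝ] ℝ :=
      (ContinuousLinearMap.apply ℝ ℝ y).comp ((ContinuousLinearMap.apply ℝ (Z →L[ℝ] ℝ)) x)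
      - (ContinuousLinearMap.apply ℝ ℝ x).comp ((ContinuousLinearMap.apply ℝ (Z →L[ℝ] ℝ)) y)
      with hφ
    have hφval : ∀ L : Z →L[ℝ] Z →L[ℝ] ℝ, φ L = L x y - L y x := by
      intro L
      rfl
    have hφconst : ∀ s ∈ Icc (0:ℝ) r, φ (A s) = 0 := by
      intro s hs
      rw [hφval, hAsymm s hs x y, sub_self]
    have h1 := φ.hasFDerivAt.comp_hasDerivWithinAt (0:ℝ) hdiff
    have h2 : HasDerivWithinAt (fun s => φ (A s)) 0 (Icc 0 r) 0 :=
      (hasDerivWithinAt_const (0:ℝ) (Icc (0:ℝ) r) (0:ℝ)).congr hφconst (hφconst 0 h0mem)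
    have hu : UniqueDiffWithinAt ℝ (Icc (0:ℝ) r) 0 := (uniqueDiffOn_Icc hr) 0 h0mem
    have h3 : φ D = 0 := by
      have e1 := h1.derivWithin hu
      have e2 := h2.derivWithin hu
      exact e1.symm.trans e2
    rw [hφval] at h3
    exact sub_eq_zero.1 h3
  obtain ⟨P, Q, R, hPt, hQt, hRt, hPpos, hQneg, hPrank, hQrank, hcount0, hRker, hkerR⟩ :=
    exists_diag (A 0) ⊤ hA0symm
  obtain ⟨P', Q', R', hP'N, hQ'N, hR'N, hP'pos, hQ'neg, hP'rank, hQ'rank, hcountN, hR'ker, hkerR'⟩ :=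
    exists_diag D N hDsymm
  have hRN : R = N := by
    apply le_antisymm
    · intro v hv
      show ∀ y, A 0 v y = 0
      intro y
      exact hRker v hv y trivial
    · intro v hv
      exact hkerR v trivial (fun y _ => hv y)
  have hR'bot : R' = ⊥ := by
    rw [eq_bot_iff]
    intro v hv
    have hvN : v ∈ N := hR'N hv
    have hv0 := hnd v hvN (fun y hy => hR'ker v hv y hy)
    simp [hv0]
  have htop : Module.finrank ℝ (⊤ : Submodule ℝ Z) = Module.finrank ℝ Z := finrank_top ℝ Z
  have hcount0' : nPos (A 0) ⊤ + nNeg (A 0) ⊤ + Module.finrank ℝ N = Module.finrank ℝ Z := by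
    rw [← hRN, ← htop]
    exact hcount0
  have hcountN' : nPos D N + nNeg D N = Module.finrank ℝ N := by
    rw [hR'bot] at hcountN
    simpa using hcountN
  have hNzero : ∀ x ∈ N, ∀ y : Z, A 0 x y = 0 := fun x hx y => hx y
  -- positive subspace
  have hPinf : P ⊓ P' = ⊥ := by
    apply inf_eq_bot_of
    intro v h1 h2 h0
    have hp := hPpos v h1 h0
    have h3 : A 0 v v = 0 := hNzero v (hP'N h2) v
    linarith
  have hQinf : Q ⊓ Q' = ⊥ := by
    apply inf_eq_bot_of
    intro v h1 h2 h0
    have hp := hQneg v h1 h0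
    have h3 : A 0 v v = 0 := hNzero v (hQ'N h2) v
    linarith
  set Vp := P ⊔ P' with hVp
  set Vm := Q ⊔ Q' with hVm
  have hVprank : Module.finrank ℝ Vp = nPos (A 0) ⊤ + nPos D N := by
    rw [hVp, finrank_sup_of_inf_bot _ _ hPinf, hPrank, hP'rank]
  have hVmrank : Module.finrank ℝ Vm = nNeg (A 0) ⊤ + nNeg D N := by
    rw [hVm, finrank_sup_of_inf_bot _ _ hQinf, hQrank, hQ'rank]
  -- quadratic form on Vp/Vm at time 0
  have hVp0 : ∀ v ∈ Vp, 0 ≤ A 0 v v ∧ (A 0 v v = 0 → v ∈ P') := by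
    intro v hv
    obtain ⟨p, hp, q, hq, rfl⟩ := Submodule.mem_sup.1 hv
    have hqN : q ∈ N := hP'N hq
    have h1 : A 0 q p = 0 := hNzero q hqN p
    have h2 : A 0 p q = 0 := by rw [hA0symm]; exact h1
    have h3 : A 0 q q = 0 := hNzero q hqN q
    have hexp : A 0 (p + q) (p + q) = A 0 p p := by
      simp [map_add, ContinuousLinearMap.add_apply, h1, h2, h3]
    constructor
    · rw [hexp]
      by_cases hp0 : p = 0
      · simp [hp0]
      · exact (hPpos p hp hp0).le
    · intro h00
      have hp0 : p = 0 := by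
        by_contra hc
        have := hPpos p hp hc
        rw [hexp] at h00
        linarith
      rw [hp0, zero_add]
      exact hq
  have hVm0 : ∀ v ∈ Vm, A 0 v v ≤ 0 ∧ (A 0 v v = 0 → v ∈ Q') := by
    intro v hv
    obtain ⟨p, hp, q, hq, rfl⟩ := Submodule.mem_sup.1 hv
    have hqN : q ∈ N := hQ'N hq
    have h1 : A 0 q p = 0 := hNzero q hqN p
    have h2 : A 0 p q = 0 := by rw [hA0symm]; exact h1
    have h3 : A 0 q q = 0 := hNzero q hqN q
    have hexp : A 0 (p + q) (p + q) = A 0 p p := by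
      simp [map_add, ContinuousLinearMap.add_apply, h1, h2, h3]
    constructor
    · rw [hexp]
      by_cases hp0 : p = 0
      · simp [hp0]
      · exact (hQneg p hp hp0).le
    · intro h00
      have hp0 : p = 0 := by
        by_contra hc
        have := hQneg p hp hc
        rw [hexp] at h00
        linarith
      rw [hp0, zero_add]
      exact hq
  -- perturbation on Vp
  obtain ⟨δ₁, hδ₁pos, hδ₁r, hδ₁⟩ := pert hr A hA Vp
    (fun v hv => (hVp0 v hv).1)
    (fun v hv hv0 h00 => hP'pos v ((hVp0 v hv).2 h00) hv0)
  -- perturbation on Vm via -A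
  have hD' : derivWithin (fun s => -(A s)) (Icc 0 r) 0 = -D := by
    have hu : UniqueDiffWithinAt ℝ (Icc (0:ℝ) r) 0 := (uniqueDiffOn_Icc hr) 0 h0mem
    exact hdiff.neg.derivWithin hu
  obtain ⟨δ₂, hδ₂pos, hδ₂r, hδ₂⟩ := pert hr (fun s => -(A s)) hA.neg Vm
    (by
      intro v hv
      have := (hVm0 v hv).1
      simp only [ContinuousLinearMap.neg_apply]
      linarith)
    (by
      intro v hv hv0 h00
      rw [hD']
      simp only [ContinuousLinearMap.neg_apply] at h00 ⊢
      have hvQ' : v ∈ Q' := (hVm0 v hv).2 (by linarith)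
      have := hQ'neg v hvQ' hv0
      linarith)
  -- conclusion
  refine ⟨min δ₁ δ₂, lt_min hδ₁pos hδ₂pos, le_trans (min_le_left _ _) hδ₁r, ?_⟩
  intro s hs
  have hs1 : s ∈ Ioc (0:ℝ) δ₁ := ⟨hs.1, le_trans hs.2 (min_le_left _ _)⟩
  have hs2 : s ∈ Ioc (0:ℝ) δ₂ := ⟨hs.1, le_trans hs.2 (min_le_right _ _)⟩
  have hsr : s ∈ Icc 0 r := ⟨hs.1.le, le_trans hs1.2 hδ₁r⟩
  have hssymm := hAsymm s hsr
  have hAspos : ∀ v ∈ Vp, v ≠ 0 → 0 < A s v v := hδ₁ s hs1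
  have hAsneg : ∀ v ∈ Vm, v ≠ 0 → A s v v < 0 := by
    intro v hv hv0
    have := hδ₂ s hs2 v hv hv0
    simp only [ContinuousLinearMap.neg_apply] at this
    linarith
  have hAsnonpos : ∀ v ∈ Vm, A s v v ≤ 0 := by
    intro v hv
    by_cases h : v = 0
    · simp [h]
    · exact (hAsneg v hv h).le
  have hAsnonneg : ∀ v ∈ Vp, 0 ≤ A s v v := by
    intro v hv
    by_cases h : v = 0
    · simp [h]
    · exact (hAspos v hv h).le
  have htotal : Module.finrank ℝ Vp + Module.finrank ℝ Vm = Module.finrank ℝ Z := by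
    rw [hVprank, hVmrank]
    omega
  refine ⟨?_, ?_, ?_⟩
  · -- nondegeneracy
    intro v hker
    by_contra hv0
    have hvnotVm : v ∉ Vm := by
      intro hmem
      have h2 := hAsneg v hmem hv0
      rw [hker v] at h2
      exact absurd h2 (lt_irrefl 0)
    have hspan_inf : Vp ⊓ (Submodule.span ℝ {v} ⊔ Vm) = ⊥ := by
      apply inf_eq_bot_of
      intro u hu1 hu2 hu0
      obtain ⟨a, ha, b, hb, rfl⟩ := Submodule.mem_sup.1 hu2
      obtain ⟨c, rfl⟩ := Submodule.mem_span_singleton.1 ha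
      have hAvv : A s v v = 0 := hker v
      have hAvb : A s v b = 0 := hker b
      have hAbv : A s b v = 0 := by rw [hssymm]; exact hker b
      have hexp : A s (c • v + b) (c • v + b) = A s b b := by
        simp [map_add, map_smul, ContinuousLinearMap.add_apply,
          ContinuousLinearMap.smul_apply, smul_eq_mul, hAvv, hAvb, hAbv]
      have hpos := hAspos _ hu1 hu0
      have hnp := hAsnonpos b hb
      rw [hexp] at hpos
      linarith
    have hvinf : Submodule.span ℝ {v} ⊓ Vm = ⊥ := by
      apply inf_eq_bot_of
      intro u hu1 hu2 hu0
      obtain ⟨c, rfl⟩ := Submodule.mem_span_singleton.1 hu1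
      have hc : c ≠ 0 := fun h => hu0 (by simp [h])
      refine hvnotVm ?_
      have h5 := Vm.smul_mem c⁻¹ hu2
      rwa [smul_smul, inv_mul_cancel₀ hc, one_smul] at h5
    have hrank1 : Module.finrank ℝ ↥(Submodule.span ℝ {v} ⊔ Vm)
        = 1 + Module.finrank ℝ Vm := by
      rw [finrank_sup_of_inf_bot _ _ hvinf, finrank_span_singleton hv0]
    have hle := finrank_add_le_of_inf_bot Vp (Submodule.span ℝ {v} ⊔ Vm) ⊤ le_top le_top
      hspan_inf
    rw [hrank1, htop] at hle
    omega
  · -- nPos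
    apply nPos_eq_of
    · exact ⟨Vp, le_top, hVprank, hAspos⟩
    · rintro dd ⟨W', hW't, hW'rank, hW'pos⟩
      have hinf : W' ⊓ Vm = ⊥ := by
        apply inf_eq_bot_of
        intro u h1 h2 h0
        have h3 := hW'pos u h1 h0
        have h4 := hAsnonpos u h2
        linarith
      have hle := finrank_add_le_of_inf_bot W' Vm ⊤ le_top le_top hinf
      rw [hW'rank, htop] at hle
      omega
  · -- nNeg
    apply nNeg_eq_of
    · exact ⟨Vm, le_top, hVmrank, hAsneg⟩
    · rintro dd ⟨W', hW't, hW'rank, hW'neg⟩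
      have hinf : W' ⊓ Vp = ⊥ := by
        apply inf_eq_bot_of
        intro u h1 h2 h0
        have h3 := hW'neg u h1 h0
        have h4 := hAsnonneg u h2
        linarith
      have hle := finrank_add_le_of_inf_bot W' Vp ⊤ le_top le_top hinf
      rw [hW'rank, htop] at hle
      omega
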